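/- arXiv:1307.2136 — 2 statements merged into one kernel-verified Lean document; each statement's English description precedes it below -/
import Mathlib

section
/- The matrices U and V defined by U_{i,j} = √(2/(N+1/2)) cos(2(i−1/2)(N−j+1/2)π/(2N+1)) and V_{i,j} = (−1)^{j+1} √(2/(N+1/2)) sin(2ijπ/(2N+1)) are orthogonal N×N matrices. -/
open Matrix Real

/-- U_{i,j} = √(2/(N+1/2)) cos(2(i−1/2)(N−j+1/2)π/(2N+1)), 1-based indices i = i₀+1, j = j₀+1. -/
noncomputable def Umat (N : ℕ) : Matrix (Fin N) (Fin N) ℝ :=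
  Matrix.of fun i j =>
    Real.sqrt (2 / ((N : ℝ) + 1 / 2)) *
      Real.cos (2 * ((i : ℝ) + 1 / 2) * ((N : ℝ) - (j : ℝ) - 1 / 2) * π / (2 * (N : ℝ) + 1))

/-- V_{i,j} = (−1)^{j+1} √(2/(N+1/2)) sin(2ijπ/(2N+1)), 1-based indices
(so with 0-based j₀, (−1)^{j+1} = (−1)^{j₀}). -/
noncomputable def Vmat (N : ℕ) : Matrix (Fin N) (Fin N) ℝ :=
  Matrix.of fun i j =>
    (-1 : ℝ) ^ (j : ℕ) * Real.sqrt (2 / ((N : ℝ) + 1 / 2)) *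
      Real.sin (2 * ((i : ℝ) + 1) * ((j : ℝ) + 1) * π / (2 * (N : ℝ) + 1))



lemma tel1 (N : ℕ) (θ : ℝ) :
    ∑ i ∈ Finset.range N, 2 * Real.sin θ * Real.cos ((2 * (i : ℝ) + 1) * θ)
      = Real.sin (2 * N * θ) := by
  induction N with
  | zero => simp
  | succ n ih =>
    rw [Finset.sum_range_succ, ih]
    have h : Real.sin (2 * ((n : ℝ) + 1) * θ) - Real.sin (2 * (n : ℝ) * θ)
        = 2 * Real.sin θ * Real.cos ((2 * (n : ℝ) + 1) * θ) := by
      rw [Real.sin_sub_sin,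
        show (2 * ((n : ℝ) + 1) * θ - 2 * (n : ℝ) * θ) / 2 = θ by ring,
        show (2 * ((n : ℝ) + 1) * θ + 2 * (n : ℝ) * θ) / 2 = (2 * (n : ℝ) + 1) * θ by ring]
    push_cast
    linarith

lemma tel2 (N : ℕ) (θ : ℝ) :
    ∑ i ∈ Finset.range N, 2 * Real.sin θ * Real.cos (2 * ((i : ℝ) + 1) * θ)
      = Real.sin ((2 * N + 1) * θ) - Real.sin θ := by
  induction N with
  | zero => simp
  | succ n ih =>
    rw [Finset.sum_range_succ, ih]
    have h : Real.sin ((2 * ((n : ℝ) + 1) + 1) * θ) - Real.sin ((2 * (n : ℝ) + 1) * θ)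
        = 2 * Real.sin θ * Real.cos (2 * ((n : ℝ) + 1) * θ) := by
      rw [Real.sin_sub_sin,
        show ((2 * ((n : ℝ) + 1) + 1) * θ - (2 * (n : ℝ) + 1) * θ) / 2 = θ by ring,
        show ((2 * ((n : ℝ) + 1) + 1) * θ + (2 * (n : ℝ) + 1) * θ) / 2
          = 2 * ((n : ℝ) + 1) * θ by ring]
    push_cast
    linarith

lemma sin_theta_ne_zero (N : ℕ) (t : ℤ) (ht : ¬ ((2 * (N : ℤ) + 1) ∣ t)) :
    Real.sin ((t : ℝ) * π / (2 * (N : ℝ) + 1)) ≠ 0 := by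
  rw [Real.sin_ne_zero_iff]
  intro n hn
  have hM : (2 * (N : ℝ) + 1) ≠ 0 := by positivity
  have hπ : (π : ℝ) ≠ 0 := Real.pi_ne_zero
  apply ht
  rw [eq_div_iff hM] at hn
  have h1 : ((n : ℝ)) * (2 * (N : ℝ) + 1) = (t : ℝ) :=
    mul_right_cancel₀ hπ (by linear_combination hn)
  have h2 : n * (2 * (N : ℤ) + 1) = t := by exact_mod_cast h1
  exact ⟨n, by rw [← h2]; ring⟩

lemma sum_cos_odd (N : ℕ) (t : ℤ) (ht : ¬ ((2 * (N : ℤ) + 1) ∣ t)) :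
    ∑ i ∈ Finset.range N, Real.cos ((2 * (i : ℝ) + 1) * ((t : ℝ) * π / (2 * (N : ℝ) + 1)))
      = - Real.cos (t * π) / 2 := by
  set θ := (t : ℝ) * π / (2 * (N : ℝ) + 1) with hθ
  have hs : Real.sin θ ≠ 0 := sin_theta_ne_zero N t ht
  have key := tel1 N θ
  have hM : (2 * (N : ℝ) + 1) ≠ 0 := by positivity
  have h2N : 2 * (N : ℝ) * θ = (t : ℝ) * π - θ := by
    rw [hθ]; field_simp; ring
  rw [h2N, Real.sin_int_mul_pi_sub, ← Finset.mul_sum] at key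
  have hcos : Real.cos ((t : ℝ) * π) = (-1 : ℝ) ^ t := by
    simpa using Real.cos_int_mul_pi_sub 0 t
  rw [hcos]
  have h2s : (2 * Real.sin θ) ≠ 0 := mul_ne_zero two_ne_zero hs
  refine mul_left_cancel₀ h2s ?_
  rw [key]; ring

lemma sum_cos_even (N : ℕ) (t : ℤ) (ht : ¬ ((2 * (N : ℤ) + 1) ∣ t)) :
    ∑ i ∈ Finset.range N, Real.cos (2 * ((i : ℝ) + 1) * ((t : ℝ) * π / (2 * (N : ℝ) + 1)))
      = - (1 / 2) := by
  set θ := (t : ℝ) * π / (2 * (N : ℝ) + 1) with hθ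
  have hs : Real.sin θ ≠ 0 := sin_theta_ne_zero N t ht
  have key := tel2 N θ
  have hM : (2 * (N : ℝ) + 1) ≠ 0 := by positivity
  have h2N : (2 * (N : ℝ) + 1) * θ = (t : ℝ) * π := by
    rw [hθ]; field_simp
  rw [h2N, Real.sin_int_mul_pi, ← Finset.mul_sum] at key
  have h2s : (2 * Real.sin θ) ≠ 0 := mul_ne_zero two_ne_zero hs
  refine mul_left_cancel₀ h2s ?_
  rw [key]; ring

lemma cos_int_pi_add_odd (a b : ℤ) (h : Odd (a + b)) :
    Real.cos ((a : ℝ) * π) + Real.cos ((b : ℝ) * π) = 0 := by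
  have ha : Real.cos ((a : ℝ) * π) = (-1 : ℝ) ^ a := by simpa using Real.cos_int_mul_pi_sub 0 a
  have hb : Real.cos ((b : ℝ) * π) = (-1 : ℝ) ^ b := by simpa using Real.cos_int_mul_pi_sub 0 b
  rw [ha, hb]
  have hab : (-1 : ℝ) ^ a * (-1 : ℝ) ^ b = -1 := by
    rw [← zpow_add₀ (by norm_num : (-1:ℝ) ≠ 0)]; exact h.neg_one_zpow
  have h2 : (-1 : ℝ) ^ a * (-1 : ℝ) ^ a = 1 := by
    rw [← zpow_add₀ (by norm_num : (-1:ℝ) ≠ 0)]; exact Even.neg_one_zpow ⟨a, rfl⟩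
  have h3 : (-1 : ℝ) ^ b * (-1 : ℝ) ^ b = 1 := by
    rw [← zpow_add₀ (by norm_num : (-1:ℝ) ≠ 0)]; exact Even.neg_one_zpow ⟨b, rfl⟩
  have h4 : ((-1 : ℝ) ^ a + (-1 : ℝ) ^ b) ^ 2 = 0 := by nlinarith [hab, h2, h3]
  have := pow_eq_zero_iff (n := 2) (by norm_num) |>.mp h4
  linarith

lemma not_dvd_of_lt (M t : ℤ) (h0 : t ≠ 0) (hlt : |t| < M) : ¬ (M ∣ t) := by
  intro hd
  have hd' : M ∣ |t| := (dvd_abs M t).mpr hd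
  have := Int.le_of_dvd (abs_pos.mpr h0) hd'
  omega



/-- The matrices U and V are orthogonal: UᵀU = I and VᵀV = I. -/
theorem U_V_orthogonal (N : ℕ) (hN : 1 ≤ N) :
    (Umat N)ᵀ * Umat N = 1 ∧ (Vmat N)ᵀ * Vmat N = 1 := by
  have hMR : (2 * (N : ℝ) + 1) ≠ 0 := by positivity
  set c : ℝ := Real.sqrt (2 / ((N : ℝ) + 1 / 2)) with hcdef
  have hc : c * c = 4 / (2 * (N : ℝ) + 1) := by
    rw [hcdef, Real.mul_self_sqrt (by positivity)]
    rw [div_eq_div_iff (by positivity) hMR]; ring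
  have hcc : ∀ a b : ℝ, (c * Real.cos a) * (c * Real.cos b)
      = c * c / 2 * (Real.cos (a - b) + Real.cos (a + b)) := by
    intro a b; rw [Real.cos_sub, Real.cos_add]; ring
  constructor
  · ext j k
    rw [Matrix.mul_apply]
    simp only [Umat, Matrix.transpose_apply, Matrix.of_apply, Matrix.one_apply]
    have hj : (j : ℕ) < N := j.isLt
    have hk : (k : ℕ) < N := k.isLt
    by_cases hjk : j = k
    · subst hjk
      rw [if_pos rfl]
      set t2 : ℤ := 2 * (N : ℤ) - 1 - 2 * (j : ℤ) with ht2def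
      have ht2 : ¬ ((2 * (N : ℤ) + 1) ∣ t2) := by
        apply not_dvd_of_lt _ _ (by omega) (by rw [abs_lt]; omega)
      calc ∑ i : Fin N,
            (c * Real.cos (2 * ((i : ℝ) + 1/2) * ((N : ℝ) - (j : ℝ) - 1/2) * π / (2 * (N : ℝ) + 1))) *
            (c * Real.cos (2 * ((i : ℝ) + 1/2) * ((N : ℝ) - (j : ℝ) - 1/2) * π / (2 * (N : ℝ) + 1)))
          = ∑ i ∈ Finset.range N, c * c / 2 *
            (1 + Real.cos ((2 * (i : ℝ) + 1) * ((t2 : ℝ) * π / (2 * (N : ℝ) + 1)))) := by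
            rw [← Fin.sum_univ_eq_sum_range]
            refine Finset.sum_congr rfl fun i _ => ?_
            rw [hcc]
            congr 2
            · rw [show (2 * ((i:ℝ) + 1/2) * ((N:ℝ) - (j:ℝ) - 1/2) * π / (2 * (N:ℝ) + 1))
                  - (2 * ((i:ℝ) + 1/2) * ((N:ℝ) - (j:ℝ) - 1/2) * π / (2 * (N:ℝ) + 1)) = 0 by ring,
                Real.cos_zero]
            · push_cast [ht2def]; ring
        _ = 1 := by
            rw [← Finset.mul_sum, Finset.sum_add_distrib, Finset.sum_const,
              Finset.card_range, sum_cos_odd N t2 ht2]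
            have hcos2 : Real.cos ((t2 : ℝ) * π) = -1 := by
              have h1 : Real.cos ((t2:ℝ) * π) = (-1 : ℝ) ^ t2 := by
                simpa using Real.cos_int_mul_pi_sub 0 t2
              rw [h1]
              exact Odd.neg_one_zpow (by rw [Int.odd_iff]; omega)
            rw [hcos2, hc]
            field_simp
            ring
    · rw [if_neg hjk]
      set t1 : ℤ := (k : ℤ) - (j : ℤ) with ht1def
      set t2 : ℤ := 2 * (N : ℤ) - 1 - (j : ℤ) - (k : ℤ) with ht2def
      have hjk' : (j : ℕ) ≠ (k : ℕ) := fun h => hjk (Fin.val_injective h)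
      have ht1 : ¬ ((2 * (N : ℤ) + 1) ∣ t1) := by
        apply not_dvd_of_lt _ _ (by omega) (by rw [abs_lt]; omega)
      have ht2 : ¬ ((2 * (N : ℤ) + 1) ∣ t2) := by
        apply not_dvd_of_lt _ _ (by omega) (by rw [abs_lt]; omega)
      calc ∑ i : Fin N,
            (c * Real.cos (2 * ((i : ℝ) + 1/2) * ((N : ℝ) - (j : ℝ) - 1/2) * π / (2 * (N : ℝ) + 1))) *
            (c * Real.cos (2 * ((i : ℝ) + 1/2) * ((N : ℝ) - (k : ℝ) - 1/2) * π / (2 * (N : ℝ) + 1)))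
          = ∑ i ∈ Finset.range N, c * c / 2 *
            (Real.cos ((2 * (i : ℝ) + 1) * ((t1 : ℝ) * π / (2 * (N : ℝ) + 1)))
             + Real.cos ((2 * (i : ℝ) + 1) * ((t2 : ℝ) * π / (2 * (N : ℝ) + 1)))) := by
            rw [← Fin.sum_univ_eq_sum_range]
            refine Finset.sum_congr rfl fun i _ => ?_
            rw [hcc]
            congr 2
            · push_cast [ht1def]; ring
            · push_cast [ht2def]; ring
        _ = 0 := by
            rw [← Finset.mul_sum, Finset.sum_add_distrib, sum_cos_odd N t1 ht1,
              sum_cos_odd N t2 ht2]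
            have h0 : Real.cos ((t1 : ℝ) * π) + Real.cos ((t2 : ℝ) * π) = 0 :=
              cos_int_pi_add_odd t1 t2 (by rw [Int.odd_iff]; omega)
            linear_combination (-(c * c) / 4) * h0
  · ext j k
    rw [Matrix.mul_apply]
    simp only [Vmat, Matrix.transpose_apply, Matrix.of_apply, Matrix.one_apply]
    have hj : (j : ℕ) < N := j.isLt
    have hk : (k : ℕ) < N := k.isLt
    have hss : ∀ a b : ℝ, Real.sin a * Real.sin b
        = (Real.cos (a - b) - Real.cos (a + b)) / 2 := by
      intro a b; rw [Real.cos_sub, Real.cos_add]; ring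
    by_cases hjk : j = k
    · subst hjk
      rw [if_pos rfl]
      set t2 : ℤ := 2 * (j : ℤ) + 2 with ht2def
      have ht2 : ¬ ((2 * (N : ℤ) + 1) ∣ t2) := by
        apply not_dvd_of_lt _ _ (by omega) (by rw [abs_lt]; omega)
      have hsq : (-1 : ℝ) ^ ((j : ℕ)) * (-1 : ℝ) ^ ((j : ℕ)) = 1 := by
        rw [← pow_add]; exact Even.neg_one_pow ⟨(j : ℕ), rfl⟩
      calc ∑ i : Fin N,
            ((-1 : ℝ) ^ ((j : ℕ)) * c * Real.sin (2 * ((i : ℝ) + 1) * ((j : ℝ) + 1) * π / (2 * (N : ℝ) + 1))) *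
            ((-1 : ℝ) ^ ((j : ℕ)) * c * Real.sin (2 * ((i : ℝ) + 1) * ((j : ℝ) + 1) * π / (2 * (N : ℝ) + 1)))
          = ∑ i ∈ Finset.range N, c * c / 2 *
            (1 - Real.cos (2 * ((i : ℝ) + 1) * ((t2 : ℝ) * π / (2 * (N : ℝ) + 1)))) := by
            rw [← Fin.sum_univ_eq_sum_range]
            refine Finset.sum_congr rfl fun i _ => ?_
            rw [show ((-1 : ℝ) ^ ((j : ℕ)) * c * Real.sin (2 * ((i : ℝ) + 1) * ((j : ℝ) + 1) * π / (2 * (N : ℝ) + 1))) *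
                ((-1 : ℝ) ^ ((j : ℕ)) * c * Real.sin (2 * ((i : ℝ) + 1) * ((j : ℝ) + 1) * π / (2 * (N : ℝ) + 1)))
                = ((-1 : ℝ) ^ ((j : ℕ)) * (-1 : ℝ) ^ ((j : ℕ))) * (c * c) *
                  (Real.sin (2 * ((i : ℝ) + 1) * ((j : ℝ) + 1) * π / (2 * (N : ℝ) + 1)) *
                   Real.sin (2 * ((i : ℝ) + 1) * ((j : ℝ) + 1) * π / (2 * (N : ℝ) + 1))) by ring,
              hsq, hss]
            rw [show (2 * ((i:ℝ) + 1) * ((j:ℝ) + 1) * π / (2 * (N:ℝ) + 1))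
                  - (2 * ((i:ℝ) + 1) * ((j:ℝ) + 1) * π / (2 * (N:ℝ) + 1)) = 0 by ring,
              Real.cos_zero]
            rw [show (2 * ((i:ℝ) + 1) * ((j:ℝ) + 1) * π / (2 * (N:ℝ) + 1))
                  + (2 * ((i:ℝ) + 1) * ((j:ℝ) + 1) * π / (2 * (N:ℝ) + 1))
                  = 2 * ((i:ℝ) + 1) * ((t2 : ℝ) * π / (2 * (N:ℝ) + 1)) by
                push_cast [ht2def]; field_simp; ring]
            ring
        _ = 1 := by
            rw [← Finset.mul_sum, Finset.sum_sub_distrib, Finset.sum_const,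
              Finset.card_range, sum_cos_even N t2 ht2, hc]
            field_simp
            ring
    · rw [if_neg hjk]
      set t1 : ℤ := (j : ℤ) - (k : ℤ) with ht1def
      set t2 : ℤ := (j : ℤ) + (k : ℤ) + 2 with ht2def
      have hjk' : (j : ℕ) ≠ (k : ℕ) := fun h => hjk (Fin.val_injective h)
      have ht1 : ¬ ((2 * (N : ℤ) + 1) ∣ t1) := by
        apply not_dvd_of_lt _ _ (by omega) (by rw [abs_lt]; omega)
      have ht2 : ¬ ((2 * (N : ℤ) + 1) ∣ t2) := by
        apply not_dvd_of_lt _ _ (by omega) (by rw [abs_lt]; omega)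
      calc ∑ i : Fin N,
            ((-1 : ℝ) ^ ((j : ℕ)) * c * Real.sin (2 * ((i : ℝ) + 1) * ((j : ℝ) + 1) * π / (2 * (N : ℝ) + 1))) *
            ((-1 : ℝ) ^ ((k : ℕ)) * c * Real.sin (2 * ((i : ℝ) + 1) * ((k : ℝ) + 1) * π / (2 * (N : ℝ) + 1)))
          = ∑ i ∈ Finset.range N, ((-1 : ℝ) ^ ((j : ℕ)) * (-1 : ℝ) ^ ((k : ℕ))) * (c * c / 2) *
            (Real.cos (2 * ((i : ℝ) + 1) * ((t1 : ℝ) * π / (2 * (N : ℝ) + 1)))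
             - Real.cos (2 * ((i : ℝ) + 1) * ((t2 : ℝ) * π / (2 * (N : ℝ) + 1)))) := by
            rw [← Fin.sum_univ_eq_sum_range]
            refine Finset.sum_congr rfl fun i _ => ?_
            rw [show ((-1 : ℝ) ^ ((j : ℕ)) * c * Real.sin (2 * ((i : ℝ) + 1) * ((j : ℝ) + 1) * π / (2 * (N : ℝ) + 1))) *
                ((-1 : ℝ) ^ ((k : ℕ)) * c * Real.sin (2 * ((i : ℝ) + 1) * ((k : ℝ) + 1) * π / (2 * (N : ℝ) + 1)))
                = ((-1 : ℝ) ^ ((j : ℕ)) * (-1 : ℝ) ^ ((k : ℕ))) * (c * c) *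
                  (Real.sin (2 * ((i : ℝ) + 1) * ((j : ℝ) + 1) * π / (2 * (N : ℝ) + 1)) *
                   Real.sin (2 * ((i : ℝ) + 1) * ((k : ℝ) + 1) * π / (2 * (N : ℝ) + 1))) by ring,
              hss]
            rw [show (2 * ((i:ℝ) + 1) * ((j:ℝ) + 1) * π / (2 * (N:ℝ) + 1))
                  - (2 * ((i:ℝ) + 1) * ((k:ℝ) + 1) * π / (2 * (N:ℝ) + 1))
                  = 2 * ((i:ℝ) + 1) * ((t1 : ℝ) * π / (2 * (N:ℝ) + 1)) by
                push_cast [ht1def]; field_simp; ring]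
            rw [show (2 * ((i:ℝ) + 1) * ((j:ℝ) + 1) * π / (2 * (N:ℝ) + 1))
                  + (2 * ((i:ℝ) + 1) * ((k:ℝ) + 1) * π / (2 * (N:ℝ) + 1))
                  = 2 * ((i:ℝ) + 1) * ((t2 : ℝ) * π / (2 * (N:ℝ) + 1)) by
                push_cast [ht2def]; field_simp; ring]
            ring
        _ = 0 := by
            rw [← Finset.mul_sum, Finset.sum_sub_distrib, sum_cos_even N t1 ht1,
              sum_cos_even N t2 ht2]
            ring
end

section
/- Let F ∈ ℝ^{N×d} be an (r,C,α)-frame, let B̃ ∈ ℝ^{m×N} satisfy (1−ε)‖x‖₂ ≤ ‖B̃x‖₂ for all x in the column span of D^{−r}F, and suppose u ∈ ℝ^N satisfies ‖u‖_∞ ≤ K and D^r u = F x − q. Then ‖x − (B̃D^{−r}F)^† B̃ D^{−r} q‖₂ ≤ K · N^{1−α} / (C(1−ε)). -/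
open Matrix

/-- The Euclidean (ℓ₂) norm of a vector in ℝⁿ. -/
noncomputable def enorm {n : ℕ} (x : Fin n → ℝ) : ℝ := Real.sqrt (∑ i, x i ^ 2)

/-- The N×N lower bidiagonal difference matrix. -/
def Dmat (N : ℕ) : Matrix (Fin N) (Fin N) ℝ :=
  Matrix.of fun i j => if (i : ℕ) = (j : ℕ) then 1 else if (i : ℕ) = (j : ℕ) + 1 then -1 else 0

/-- The Moore–Penrose pseudoinverse (AᵀA)⁻¹Aᵀ of a full column rank matrix. -/
noncomputable def pinv {m d : ℕ} (A : Matrix (Fin m) (Fin d) ℝ) : Matrix (Fin d) (Fin m) ℝ :=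
  (Aᵀ * A)⁻¹ * Aᵀ

lemma enorm_nonneg' {n : ℕ} (x : Fin n → ℝ) : 0 ≤ _root_.enorm x := Real.sqrt_nonneg _

lemma enorm_sq' {n : ℕ} (x : Fin n → ℝ) : _root_.enorm x ^ 2 = ∑ i, x i ^ 2 :=
  Real.sq_sqrt (Finset.sum_nonneg fun i _ => sq_nonneg _)

lemma enorm_zero' {n : ℕ} : _root_.enorm (0 : Fin n → ℝ) = 0 := by simp [_root_.enorm]

lemma eq_zero_of_enorm_eq_zero {n : ℕ} {x : Fin n → ℝ} (h : _root_.enorm x = 0) : x = 0 := by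
  have hsum : (∑ i, x i ^ 2) = 0 := by
    have := congrArg (fun t => t ^ 2) h
    simpa [enorm_sq' x] using this
  funext i
  have := (Finset.sum_eq_zero_iff_of_nonneg (fun i _ => sq_nonneg (x i))).1 hsum i
    (Finset.mem_univ i)
  exact pow_eq_zero_iff (n := 2) (by norm_num) |>.1 this

lemma dot_self_eq_enorm_sq {n : ℕ} (v : Fin n → ℝ) : v ⬝ᵥ v = _root_.enorm v ^ 2 := by
  rw [enorm_sq']; simp [dotProduct, sq]

lemma dot_le_enorm_mul {n : ℕ} (v w : Fin n → ℝ) : v ⬝ᵥ w ≤ _root_.enorm v * _root_.enorm w := by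
  have h := Finset.sum_mul_sq_le_sq_mul_sq Finset.univ v w
  calc v ⬝ᵥ w ≤ |v ⬝ᵥ w| := le_abs_self _
    _ = Real.sqrt ((∑ i, v i * w i) ^ 2) := by rw [Real.sqrt_sq_eq_abs]; rfl
    _ ≤ Real.sqrt ((∑ i, v i ^ 2) * ∑ i, w i ^ 2) := Real.sqrt_le_sqrt h
    _ = _root_.enorm v * _root_.enorm w := by
        rw [Real.sqrt_mul (Finset.sum_nonneg fun i _ => sq_nonneg _)]; rfl

lemma enorm_smul' {n : ℕ} (c : ℝ) (v : Fin n → ℝ) : _root_.enorm (c • v) = |c| * _root_.enorm v := by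
  simp only [_root_.enorm, Pi.smul_apply, smul_eq_mul, mul_pow, ← Finset.mul_sum]
  rw [Real.sqrt_mul (sq_nonneg c), Real.sqrt_sq_eq_abs]

lemma enorm_le_of_bdd {n : ℕ} {v : Fin n → ℝ} {c : ℝ} (hc : 0 ≤ c) (h : ∀ i, |v i| ≤ c) :
    _root_.enorm v ≤ Real.sqrt n * c := by
  have hsum : (∑ i, v i ^ 2) ≤ (n : ℝ) * c ^ 2 := by
    calc (∑ i, v i ^ 2) ≤ ∑ _i : Fin n, c ^ 2 := by
          refine Finset.sum_le_sum fun i _ => ?_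
          have := h i
          nlinarith [abs_nonneg (v i), sq_abs (v i)]
      _ = (n : ℝ) * c ^ 2 := by simp [Finset.sum_const, mul_comm]
  calc _root_.enorm v ≤ Real.sqrt ((n : ℝ) * c ^ 2) := Real.sqrt_le_sqrt hsum
    _ = Real.sqrt n * c := by
        rw [Real.sqrt_mul (Nat.cast_nonneg n), Real.sqrt_sq hc]

lemma Dinv_pow_mul_pow (N r : ℕ) (h : (Dmat N)⁻¹ * Dmat N = 1) :
    ((Dmat N)⁻¹) ^ r * (Dmat N) ^ r = 1 := by
  induction r with
  | zero => simp
  | succ k ih =>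
      rw [pow_succ, pow_succ']
      calc ((Dmat N)⁻¹) ^ k * (Dmat N)⁻¹ * (Dmat N * (Dmat N) ^ k)
          = ((Dmat N)⁻¹) ^ k * (((Dmat N)⁻¹ * Dmat N) * (Dmat N) ^ k) := by
            rw [Matrix.mul_assoc, Matrix.mul_assoc]
        _ = 1 := by rw [h, one_mul, ih]

lemma Dmat_det (N : ℕ) : (Dmat N).det = 1 := by
  have h : ((Dmat N)ᵀ).BlockTriangular id := by
    intro i j hij
    simp only [id] at hij
    simp only [Dmat, transpose_apply, of_apply]
    rw [if_neg, if_neg] <;> omega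
  rw [← Matrix.det_transpose, Matrix.det_of_upperTriangular h]
  apply Finset.prod_eq_one
  intro i _
  simp [Dmat]

/-- Reconstruction error for ΣΔ quantization of an (r,C,α)-frame expansion, encoded with a
renormalized Bernoulli matrix B̃ = B/√m which is a lower near-isometry on the column span of
D^{−r}F: if ‖u‖_∞ ≤ K and D^r u = Fx − q, then
‖x − (B̃D^{−r}F)† B̃D^{−r}q‖₂ ≤ K·N^{1−α}/(C(1−ε)). -/
theorem bernoulli_encoded_sigma_delta_error (m N d r : ℕ) (hm : 0 < m) (hN : 0 < N)
    (ε Cc α K : ℝ) (hε0 : 0 < ε) (hε1 : ε < 1) (hC : 0 < Cc) (hα : 1 < α) (hK : 0 ≤ K)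
    (F : Matrix (Fin N) (Fin d) ℝ)
    -- (r,C,α)-frame conditions:
    (hFbdd : ∀ z : Fin d → ℝ, _root_.enorm z ≤ 1 → ∀ i : Fin N, |(F *ᵥ z) i| ≤ 1)
    (hFσ : ∀ z : Fin d → ℝ,
      Cc * (N : ℝ) ^ α * _root_.enorm z ≤ _root_.enorm ((((Dmat N)⁻¹) ^ r * F) *ᵥ z))
    -- B̃ = B/√m with B a sign matrix:
    (B : Matrix (Fin m) (Fin N) ℝ) (hB : ∀ i j, B i j = 1 ∨ B i j = -1)
    (Bt : Matrix (Fin m) (Fin N) ℝ) (hBt : Bt = (1 / Real.sqrt m) • B)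
    -- B̃ is a lower near-isometry on the column span of D^{−r}F:
    (hJL : ∀ z : Fin d → ℝ,
      (1 - ε) * _root_.enorm ((((Dmat N)⁻¹) ^ r * F) *ᵥ z) ≤
        _root_.enorm (Bt *ᵥ ((((Dmat N)⁻¹) ^ r * F) *ᵥ z)))
    -- the ΣΔ state equation and stability bound:
    (x : Fin d → ℝ) (q u : Fin N → ℝ)
    (hu : ∀ i, |u i| ≤ K)
    (hstate : (Dmat N) ^ r *ᵥ u = F *ᵥ x - q) :
    _root_.enorm (x - pinv (Bt * (((Dmat N)⁻¹) ^ r * F)) *ᵥ (Bt *ᵥ (((Dmat N)⁻¹) ^ r *ᵥ q))) ≤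
      K * (N : ℝ) ^ (1 - α) / (Cc * (1 - ε)) := by
  have hε : (0:ℝ) < 1 - ε := by linarith
  have hNα : (0:ℝ) < (N : ℝ) ^ α := Real.rpow_pos_of_pos (by exact_mod_cast hN) α
  set M : Matrix (Fin N) (Fin d) ℝ := ((Dmat N)⁻¹) ^ r * F with hM
  set A : Matrix (Fin m) (Fin d) ℝ := Bt * M with hA
  set b : Fin m → ℝ := Bt *ᵥ (((Dmat N)⁻¹) ^ r *ᵥ q) with hb
  set w : Fin d → ℝ := x - pinv A *ᵥ b with hw
  -- invertibility of Dmat and of Dmat^r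
  have hdet : IsUnit (Dmat N).det := by rw [Dmat_det]; exact isUnit_one
  have hDinv : (Dmat N)⁻¹ * Dmat N = 1 := Matrix.nonsing_inv_mul _ hdet
  have hDr : ((Dmat N)⁻¹) ^ r * (Dmat N) ^ r = 1 := Dinv_pow_mul_pow N r hDinv
  -- the state equation pulled back through D^{-r}
  have hMx : M *ᵥ x = u + ((Dmat N)⁻¹) ^ r *ᵥ q := by
    have h2 := congrArg (fun v => ((Dmat N)⁻¹) ^ r *ᵥ v) hstate
    simp only [Matrix.mulVec_sub, Matrix.mulVec_mulVec] at h2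
    rw [hDr, Matrix.one_mulVec] at h2
    rw [hM, h2]
    abel
  have hAx : A *ᵥ x = Bt *ᵥ u + b := by
    rw [hA, ← Matrix.mulVec_mulVec, hMx, Matrix.mulVec_add, hb]
  -- lower singular value bound for A
  have hlow : ∀ z : Fin d → ℝ,
      ((1 - ε) * (Cc * (N : ℝ) ^ α)) * _root_.enorm z ≤ _root_.enorm (A *ᵥ z) := by
    intro z
    have h1 := hFσ z
    have h2 := hJL z
    have hAz : A *ᵥ z = Bt *ᵥ (M *ᵥ z) := by rw [hA, ← Matrix.mulVec_mulVec]
    calc ((1 - ε) * (Cc * (N : ℝ) ^ α)) * _root_.enorm z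
        = (1 - ε) * (Cc * (N : ℝ) ^ α * _root_.enorm z) := by ring
      _ ≤ (1 - ε) * _root_.enorm (M *ᵥ z) := by
          exact mul_le_mul_of_nonneg_left h1 (le_of_lt hε)
      _ ≤ _root_.enorm (Bt *ᵥ (M *ᵥ z)) := h2
      _ = _root_.enorm (A *ᵥ z) := by rw [hAz]
  have hcpos : (0:ℝ) < (1 - ε) * (Cc * (N : ℝ) ^ α) := by positivity
  -- A has trivial kernel, hence AᵀA is invertible
  have hker : ∀ z : Fin d → ℝ, A *ᵥ z = 0 → z = 0 := by
    intro z hz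
    have := hlow z
    rw [hz, enorm_zero'] at this
    have hz0 : _root_.enorm z ≤ 0 := by nlinarith [enorm_nonneg' z]
    exact eq_zero_of_enorm_eq_zero (le_antisymm hz0 (enorm_nonneg' z))
  have hGunit : IsUnit (Aᵀ * A) := by
    rw [← Matrix.mulVec_injective_iff_isUnit]
    intro z₁ z₂ hz
    have hdiff : (Aᵀ * A) *ᵥ (z₁ - z₂) = 0 := by
      rw [Matrix.mulVec_sub]
      simpa [sub_eq_zero] using hz
    have hAz : A *ᵥ (z₁ - z₂) = 0 := by
      have hdot : (A *ᵥ (z₁ - z₂)) ⬝ᵥ (A *ᵥ (z₁ - z₂)) = 0 := by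
        have : (z₁ - z₂) ⬝ᵥ ((Aᵀ * A) *ᵥ (z₁ - z₂)) = 0 := by rw [hdiff]; simp
        rw [← Matrix.mulVec_mulVec, Matrix.dotProduct_mulVec,
          Matrix.vecMul_transpose] at this
        exact this
      rw [dot_self_eq_enorm_sq] at hdot
      have := eq_zero_of_enorm_eq_zero (pow_eq_zero_iff (n := 2) (by norm_num) |>.1 hdot)
      exact this
    have := hker _ hAz
    rwa [sub_eq_zero] at this
  have hGdet : IsUnit (Aᵀ * A).det := (Matrix.isUnit_iff_isUnit_det _).1 hGunit
  have hGinv : (Aᵀ * A) * (Aᵀ * A)⁻¹ = 1 := Matrix.mul_nonsing_inv _ hGdet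
  -- key normal-equations identity
  have hkey : Aᵀ *ᵥ (A *ᵥ w) = Aᵀ *ᵥ (Bt *ᵥ u) := by
    have h2 : Aᵀ *ᵥ (A *ᵥ (pinv A *ᵥ b)) = Aᵀ *ᵥ b := by
      rw [Matrix.mulVec_mulVec, Matrix.mulVec_mulVec, pinv, ← Matrix.mul_assoc, hGinv, Matrix.one_mul]
    rw [hw, Matrix.mulVec_sub, Matrix.mulVec_sub, h2, hAx, Matrix.mulVec_add]
    abel
  -- Cauchy–Schwarz via the key identity
  have hAw : _root_.enorm (A *ᵥ w) ≤ _root_.enorm (Bt *ᵥ u) := by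
    have hdot : (A *ᵥ w) ⬝ᵥ (A *ᵥ w) = (A *ᵥ w) ⬝ᵥ (Bt *ᵥ u) := by
      have e1 : w ⬝ᵥ (Aᵀ *ᵥ (A *ᵥ w)) = (A *ᵥ w) ⬝ᵥ (A *ᵥ w) := by
        rw [Matrix.dotProduct_mulVec, Matrix.vecMul_transpose]
      have e2 : w ⬝ᵥ (Aᵀ *ᵥ (Bt *ᵥ u)) = (A *ᵥ w) ⬝ᵥ (Bt *ᵥ u) := by
        rw [Matrix.dotProduct_mulVec, Matrix.vecMul_transpose]
      rw [← e1, hkey, e2]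
    have hcs := dot_le_enorm_mul (A *ᵥ w) (Bt *ᵥ u)
    rw [dot_self_eq_enorm_sq] at hdot
    have h := hdot.le.trans hcs
    rcases eq_or_lt_of_le (enorm_nonneg' (A *ᵥ w)) with h0 | h0
    · rw [← h0]; exact enorm_nonneg' _
    · nlinarith
  -- bound on _root_.enorm (Bt *ᵥ u)
  have hBtu : _root_.enorm (Bt *ᵥ u) ≤ K * N := by
    have hms : (0:ℝ) < Real.sqrt m := Real.sqrt_pos.2 (by exact_mod_cast hm)
    have hBu : ∀ i, |(B *ᵥ u) i| ≤ (N : ℝ) * K := by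
      intro i
      calc |(B *ᵥ u) i| = |∑ j, B i j * u j| := rfl
        _ ≤ ∑ j, |B i j * u j| := Finset.abs_sum_le_sum_abs _ _
        _ ≤ ∑ _j : Fin N, K := by
            refine Finset.sum_le_sum fun j _ => ?_
            rw [abs_mul]
            rcases hB i j with h | h <;> simp [h, hu j]
        _ = (N : ℝ) * K := by simp [mul_comm]
    have h1 : _root_.enorm (B *ᵥ u) ≤ Real.sqrt m * ((N : ℝ) * K) :=
      enorm_le_of_bdd (by positivity) hBu
    have h2 : Bt *ᵥ u = (1 / Real.sqrt m) • (B *ᵥ u) := by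
      rw [hBt, Matrix.smul_mulVec]
    rw [h2, enorm_smul', abs_of_pos (by positivity : (0:ℝ) < 1 / Real.sqrt m)]
    calc 1 / Real.sqrt m * _root_.enorm (B *ᵥ u)
        ≤ 1 / Real.sqrt m * (Real.sqrt m * ((N : ℝ) * K)) := by
          exact mul_le_mul_of_nonneg_left h1 (by positivity)
      _ = K * N := by field_simp
  -- put everything together
  have hfinal : ((1 - ε) * (Cc * (N : ℝ) ^ α)) * _root_.enorm w ≤ K * N :=
    (hlow w).trans (hAw.trans hBtu)
  have hrhs : K * (N : ℝ) ^ (1 - α) / (Cc * (1 - ε)) =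
      K * N / ((1 - ε) * (Cc * (N : ℝ) ^ α)) := by
    have hNe : ((N:ℝ)) ^ α ≠ 0 := ne_of_gt hNα
    have hCe : Cc ≠ 0 := ne_of_gt hC
    have hεe : (1:ℝ) - ε ≠ 0 := ne_of_gt hε
    rw [Real.rpow_sub (by exact_mod_cast hN), Real.rpow_one]
    rw [div_eq_div_iff (by positivity) (ne_of_gt hcpos)]
    field_simp
  rw [hrhs, le_div_iff₀ hcpos]
  linarith
end
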